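/- With ω = Σ_{i,j=1}^n A_{ij} ψ_j·φ_i in the exterior algebra Λ of R^{2n}, one has ω^n = n! · det(A) · (ψ₁·φ₁·ψ₂·φ₂·⋯·ψ_n·φ_n). (This is the fermionic-integral identity (A.31) of the paper, ∫ exp(Σ A_{ij} ψ⁺_j ψ⁻_i) dψ = det A, used in the Appendix proof of the Kontsevich-integral formula for the Alexander polynomial.) -/

import Mathlib

open ExteriorAlgebra

/-- The odd generator `ψᵢ` of the exterior algebra of `R^{2n} = (Fin n → R) × (Fin n → R)`:
the image of the `i`-th standard basis vector of the first factor. -/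
noncomputable def fermionPsi {R : Type*} [CommRing R] {n : ℕ} (i : Fin n) :
    ExteriorAlgebra R ((Fin n → R) × (Fin n → R)) :=
  ExteriorAlgebra.ι R ((Pi.single i 1 : Fin n → R), 0)

/-- The odd generator `φᵢ` of the exterior algebra of `R^{2n} = (Fin n → R) × (Fin n → R)`:
the image of the `i`-th standard basis vector of the second factor. -/
noncomputable def fermionPhi {R : Type*} [CommRing R] {n : ℕ} (i : Fin n) :
    ExteriorAlgebra R ((Fin n → R) × (Fin n → R)) :=
  ExteriorAlgebra.ι R (0, (Pi.single i 1 : Fin n → R))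




section
variable {S : Type*} [Ring S]

lemma auxSumPowZero : ∀ (l : List S), l.Pairwise Commute → (∀ x ∈ l, x * x = 0) →
    ∀ m : ℕ, l.length < m → l.sum ^ m = 0 := by
  intro l
  induction l with
  | nil =>
    intro _ _ m hm
    simp only [List.sum_nil]
    exact zero_pow (by omega)
  | cons a t ih =>
    intro hc hsq m hm
    have hct := (List.pairwise_cons.mp hc).1
    have hat : Commute a t.sum := Commute.list_sum_right _ _ hct
    rw [List.sum_cons, hat.add_pow]
    apply Finset.sum_eq_zero
    intro k _
    have hsq' : ∀ x ∈ t, x * x = 0 := fun x hx => hsq x (List.mem_cons_of_mem _ hx)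
    have hc' := hc.of_cons
    match k with
    | 0 =>
      simp only [pow_zero, one_mul, Nat.sub_zero]
      rw [ih hc' hsq' m (by simp at hm; omega), zero_mul]
    | 1 =>
      rw [ih hc' hsq' (m - 1) (by simp at hm; omega), pow_one, mul_zero, zero_mul]
    | (k+2) =>
      have ha : a ^ (k+2) = 0 := by
        rw [pow_succ, pow_succ, mul_assoc, hsq a List.mem_cons_self, mul_zero]
      rw [ha, zero_mul, zero_mul]

lemma auxSumPow : ∀ (l : List S), l.Pairwise Commute → (∀ x ∈ l, x * x = 0) →
    l.sum ^ l.length = l.length.factorial • l.prod := by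
  intro l
  induction l with
  | nil => simp
  | cons a t ih =>
    intro hc hsq
    have hct := (List.pairwise_cons.mp hc).1
    have hat : Commute a t.sum := Commute.list_sum_right _ _ hct
    have hsq' : ∀ x ∈ t, x * x = 0 := fun x hx => hsq x (List.mem_cons_of_mem _ hx)
    have hc' := hc.of_cons
    rw [List.sum_cons, List.length_cons, hat.add_pow]
    have hsub : ({0, 1} : Finset ℕ) ⊆ Finset.range (t.length + 1 + 1) := by
      intro x hx
      simp only [Finset.mem_insert, Finset.mem_singleton] at hx
      rcases hx with rfl | rfl <;> simp
    rw [← Finset.sum_subset hsub]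
    · rw [Finset.sum_pair (by norm_num : (0:ℕ) ≠ 1)]
      simp only [pow_zero, pow_one, one_mul, Nat.sub_zero, Nat.add_sub_cancel,
        Nat.choose_one_right]
      rw [auxSumPowZero t hc' hsq' (t.length + 1) (by omega), zero_mul, zero_add]
      rw [ih hc' hsq', List.prod_cons, Nat.factorial_succ, mul_smul_comm, smul_mul_assoc,
        ← (Nat.cast_commute (t.length + 1) (a * t.prod)).eq, ← nsmul_eq_mul, smul_smul,
        Nat.mul_comm]
    · intro x hx hnx
      simp only [Finset.mem_insert, Finset.mem_singleton, not_or] at hnx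
      match x, hnx with
      | (k+2), _ =>
        have ha : a ^ (k+2) = 0 := by
          rw [pow_succ, pow_succ, mul_assoc, hsq a List.mem_cons_self, mul_zero]
        rw [ha, zero_mul, zero_mul]
end


set_option synthInstance.maxHeartbeats 1000000 in
section
variable {R : Type*} [CommRing R] {n : ℕ}

set_option synthInstance.maxHeartbeats 1000000 in
noncomputable def auxF (R : Type*) [CommRing R] (n : ℕ) :
    MultilinearMap R (fun _ : Fin n => (Fin n → R))
      (ExteriorAlgebra R ((Fin n → R) × (Fin n → R))) :=
  (MultilinearMap.mkPiAlgebraFin R n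
      (ExteriorAlgebra R ((Fin n → R) × (Fin n → R)))).compLinearMap fun i =>
    (LinearMap.mulRight R (fermionPhi i)).comp
      ((ExteriorAlgebra.ι R).comp (LinearMap.inl R (Fin n → R) (Fin n → R)))

lemma auxF_apply (u : Fin n → Fin n → R) :
    auxF R n u = (List.ofFn fun i => ι R ((u i, 0) : (Fin n → R) × (Fin n → R)) * fermionPhi i).prod := by
  simp [auxF]

end

section
variable {R : Type*} [CommRing R] {n : ℕ}

lemma auxAnticomm' {M : Type*} [AddCommGroup M] [Module R M] (x y : M) :
    ι R x * ι R y = -(ι R y * ι R x) :=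
  eq_neg_of_add_eq_zero_left (ι_add_mul_swap x y)

lemma auxCommuteSingle {M : Type*} [AddCommGroup M] [Module R M] (a z w : M) :
    Commute (ι R a) (ι R z * ι R w) := by
  show _ = _
  rw [← mul_assoc, auxAnticomm' a z, neg_mul, mul_assoc, auxAnticomm' a w, mul_neg, neg_neg,
    ← mul_assoc]

lemma auxCommutePair {M : Type*} [AddCommGroup M] [Module R M] (x y z w : M) :
    Commute (ι R x * ι R y) (ι R z * ι R w) :=
  Commute.mul_left (auxCommuteSingle x z w) (auxCommuteSingle y z w)

lemma auxPairShared {M : Type*} [AddCommGroup M] [Module R M] (x y w : M) :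
    (ι R x * ι R y) * (ι R x * ι R w) = 0 := by
  rw [mul_assoc, ← mul_assoc (ι R y), auxAnticomm' y x, neg_mul, mul_neg, ← mul_assoc,
    ← mul_assoc, ι_sq_zero, zero_mul, zero_mul, neg_zero]

lemma auxNoncommProdCongr {S : Type*} [Monoid S] {s t : Multiset S} (h : s = t)
    (c : {x | x ∈ s}.Pairwise Commute) :
    s.noncommProd c = t.noncommProd (by rw [← h]; exact c) := by subst h; rfl

lemma auxBridge {S : Type*} [Monoid S] {m : ℕ} (g : Fin m → S)
    (comm : (↑(Finset.univ : Finset (Fin m)) : Set (Fin m)).Pairwise fun a b => Commute (g a) (g b)) :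
    Finset.univ.noncommProd g comm = (List.ofFn g).prod := by
  show (Multiset.map g Finset.univ.val).noncommProd _ = _
  rw [auxNoncommProdCongr (show Multiset.map g Finset.univ.val = ↑(List.ofFn g) by
    simp [Fin.univ_val_map])]
  exact Multiset.noncommProd_coe _ _

lemma auxProdZero {S : Type*} [Ring S] {m : ℕ} (g : Fin m → S)
    (hc : ∀ i j, Commute (g i) (g j))
    {i j : Fin m} (hij : i ≠ j) (h0 : g i * g j = 0) : (List.ofFn g).prod = 0 := by
  classical
  have comm : (↑(Finset.univ : Finset (Fin m)) : Set (Fin m)).Pairwise fun a b => Commute (g a) (g b) :=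
    fun a _ b _ _ => hc a b
  rw [← auxBridge g comm,
    ← Finset.mul_noncommProd_erase Finset.univ (Finset.mem_univ i) g comm,
    ← Finset.mul_noncommProd_erase (Finset.univ.erase i)
      (Finset.mem_erase.mpr ⟨hij.symm, Finset.mem_univ j⟩) g (fun a _ b _ _ => hc a b),
    ← mul_assoc, h0, zero_mul]

noncomputable def auxFA (R : Type*) [CommRing R] (n : ℕ) :
    (Fin n → R) [⋀^Fin n]→ₗ[R] ExteriorAlgebra R ((Fin n → R) × (Fin n → R)) where
  toMultilinearMap := auxF R n
  map_eq_zero_of_eq' := by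
    intro v i j h hij
    show auxF R n v = 0
    rw [auxF_apply]
    exact auxProdZero _ (fun a b => auxCommutePair _ _ _ _) hij
      (by rw [show ((v i, 0) : (Fin n → R) × (Fin n → R)) = (v j, 0) by rw [h]]
          exact auxPairShared _ _ _)

lemma auxFA_apply (u : Fin n → Fin n → R) :
    auxFA R n u = (List.ofFn fun i => ι R ((u i, 0) : (Fin n → R) × (Fin n → R)) * fermionPhi i).prod :=
  auxF_apply u

lemma auxFA_det (A : Matrix (Fin n) (Fin n) R) :
    auxFA R n (fun i => A i) = A.det • auxFA R n (fun i => Pi.single i 1) := by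
  classical
  set e := Pi.basisFun R (Fin n) with he
  have key : auxFA R n
      = (LinearMap.toSpanSingleton R _ (auxFA R n ⇑e)).compAlternatingMap e.det := by
    apply Module.Basis.ext_alternating e
    intro v hv
    have hb : Function.Bijective v := Finite.injective_iff_bijective.mp hv
    set σ : Equiv.Perm (Fin n) := Equiv.ofBijective v hb with hσ
    have hvσ : (fun i => e (v i)) = ⇑e ∘ ⇑σ := rfl
    rw [hvσ, AlternatingMap.map_perm, LinearMap.compAlternatingMap_apply,
      AlternatingMap.map_perm, Module.Basis.det_self, LinearMap.toSpanSingleton_apply]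
    simp [Units.smul_def, zsmul_eq_mul, Int.cast_smul_eq_zsmul]
  have h1 : e.det (fun i => A i) = A.det := by
    rw [he, Pi.basisFun_det]
    rfl
  have h2 : ⇑e = fun i => (Pi.single i 1 : Fin n → R) := by
    funext i; simp [he]
  conv_lhs => rw [key]
  rw [LinearMap.compAlternatingMap_apply, LinearMap.toSpanSingleton_apply, h1, h2]

end

set_option maxHeartbeats 1000000 in
set_option linter.unusedVariables false in
/-- Fermionic Gaussian integral: with `ω = Σ_{i,j} A_{ij} ψ_j φ_i` in the exterior algebra of
`R^{2n}`, one has `ω^n = n! · det A · ψ₁φ₁⋯ψ_nφ_n`. -/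
theorem omega_pow_eq_factorial_det_smul
    {R : Type*} [CommRing R] {n : ℕ} (hn : 1 ≤ n) (A : Matrix (Fin n) (Fin n) R) :
    (∑ i : Fin n, ∑ j : Fin n, A i j • (fermionPsi j * fermionPhi i)) ^ n =
      (Nat.factorial n : R) • A.det •
        ((List.finRange n).map (fun i => fermionPsi (R := R) i * fermionPhi i)).prod := by
  classical
  have hrow : ∀ i : Fin n, (∑ j, A i j • fermionPsi (R := R) j)
      = ι R ((A i, 0) : (Fin n → R) × (Fin n → R)) := by
    intro i
    have hv : ((A i, 0) : (Fin n → R) × (Fin n → R))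
        = ∑ j, A i j • ((Pi.single j 1 : Fin n → R), (0 : Fin n → R)) := by
      apply Prod.ext
      · rw [Prod.fst_sum]
        funext k
        simp [Pi.single_apply, Finset.sum_ite_eq']
      · rw [Prod.snd_sum]
        simp
    rw [hv, map_sum]
    refine Finset.sum_congr rfl fun j _ => ?_
    rw [fermionPsi, ← map_smul]
  have hsum : (∑ i : Fin n, ∑ j : Fin n, A i j • (fermionPsi j * fermionPhi i))
      = ∑ i : Fin n, ι R ((A i, 0) : (Fin n → R) × (Fin n → R)) * fermionPhi i := by
    refine Finset.sum_congr rfl fun i _ => ?_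
    calc ∑ j, A i j • (fermionPsi j * fermionPhi i)
        = ∑ j, (A i j • fermionPsi (R := R) j) * fermionPhi i := by
          simp [smul_mul_assoc]
      _ = (∑ j, A i j • fermionPsi (R := R) j) * fermionPhi i := (Finset.sum_mul _ _ _).symm
      _ = _ := by rw [hrow i]
  rw [hsum]
  have hsum2 : (∑ i : Fin n, ι R ((A i, 0) : (Fin n → R) × (Fin n → R)) * fermionPhi i)
      = (List.ofFn fun i : Fin n =>
          ι R ((A i, 0) : (Fin n → R) × (Fin n → R)) * fermionPhi i).sum := by
    rw [List.sum_ofFn]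
  rw [hsum2]
  have hpair : (List.ofFn fun i : Fin n =>
      ι R ((A i, 0) : (Fin n → R) × (Fin n → R)) * fermionPhi i).Pairwise Commute :=
    List.pairwise_ofFn.mpr fun i j _ => auxCommutePair _ _ _ _
  have hsqs : ∀ x ∈ (List.ofFn fun i : Fin n =>
      ι R ((A i, 0) : (Fin n → R) × (Fin n → R)) * fermionPhi i), x * x = 0 := by
    intro x hx
    rw [List.mem_ofFn] at hx
    obtain ⟨i, rfl⟩ := hx
    exact auxPairShared _ _ _
  have hpow := auxSumPow _ hpair hsqs
  rw [List.length_ofFn] at hpow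
  rw [hpow]
  have hprod : (List.ofFn fun i : Fin n =>
      ι R ((A i, 0) : (Fin n → R) × (Fin n → R)) * fermionPhi i).prod
      = A.det • ((List.finRange n).map
          (fun i => fermionPsi (R := R) i * fermionPhi i)).prod := by
    have h1 : (List.ofFn fun i : Fin n =>
        ι R ((A i, 0) : (Fin n → R) × (Fin n → R)) * fermionPhi i).prod
        = auxFA R n (fun i => A i) := by
      rw [auxFA_apply]
    rw [h1, auxFA_det, auxFA_apply, ← List.ofFn_eq_map]
    rfl
  rw [hprod, ← Nat.cast_smul_eq_nsmul R]
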